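/- Let (G,γ) be a ℤ/2ℤ-colored graph decomposed as the edge-disjoint union of a spanning tree T all of whose edges are colored 0 and a spanning map-graph X each of whose components has nontrivial ρ-image. In the double cover (lift) G̃ determined by the coloring: (1) each edge of T lifts to two edges joining vertices with equal labels, so T lifts to two disjoint copies of itself and all vertices with label 0 lie in one connected component of the lift of T; and (2) each connected component of X lifts to a connected subgraph of G̃. -/

import Mathlib

section Preamble
variable {V E : Type}

/-- Rotation of the plane by angle θ, as a 2×2 matrix. -/
noncomputable def rotM (θ : ℝ) : Matrix (Fin 2) (Fin 2) ℝ :=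
  !![Real.cos θ, -Real.sin θ; Real.sin θ, Real.cos θ]

/-- Counterclockwise rotation by π/2. -/
def perp (x : Fin 2 → ℝ) : Fin 2 → ℝ := ![-(x 1), x 0]

def dot (a b : Fin 2 → ℝ) : ℝ := a 0 * b 0 + a 1 * b 1

def unitv (x : Fin 2 → ℝ) : Prop := x 0 ^ 2 + x 1 ^ 2 = 1

/-- Vertices spanned by an edge set. -/
def verts [DecidableEq V] (src tgt : E → V) (S : Finset E) : Finset V :=
  S.image src ∪ S.image tgt

/-- Walks in a directed multigraph using edges of `S`, each edge traversed
forwards (`true`) or backwards (`false`). -/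
def IsWalk (src tgt : E → V) (S : Finset E) : V → V → List (E × Bool) → Prop
  | a, b, [] => a = b
  | a, b, (e, o) :: rest =>
      e ∈ S ∧ (if o = true then src e = a ∧ IsWalk src tgt S (tgt e) b rest
               else tgt e = a ∧ IsWalk src tgt S (src e) b rest)

/-- Signed sum of colors along a walk. -/
def wsum {k : ℕ} (col : E → ZMod k) (l : List (E × Bool)) : ZMod k :=
  (l.map fun s => if s.2 = true then col s.1 else - col s.1).sum

def Conn (src tgt : E → V) (S : Finset E) (a b : V) : Prop :=
  ∃ l, IsWalk src tgt S a b l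

def compOf [DecidableEq V] (src tgt : E → V) (S : Finset E) (v : V) : Set V :=
  {u | u ∈ verts src tgt S ∧ Conn src tgt S v u}

/-- Connected components of the subgraph spanned by S. -/
def comps [DecidableEq V] (src tgt : E → V) (S : Finset E) : Set (Set V) :=
  {C | ∃ v ∈ verts src tgt S, C = compOf src tgt S v}

/-- A component has trivial ρ-image: all closed walks in it have color sum 0. -/
def TrivComp {k : ℕ} (src tgt : E → V) (col : E → ZMod k) (S : Finset E) (C : Set V) : Prop :=
  ∀ v ∈ C, ∀ l, IsWalk src tgt S v v l → wsum col l = 0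

/-- number of connected components with trivial ρ-image -/
noncomputable def c0 [DecidableEq V] {k : ℕ} (src tgt : E → V) (col : E → ZMod k)
    (S : Finset E) : ℕ :=
  {C ∈ comps src tgt S | TrivComp src tgt col S C}.ncard

/-- number of connected components with nontrivial ρ-image -/
noncomputable def cN [DecidableEq V] {k : ℕ} (src tgt : E → V) (col : E → ZMod k)
    (S : Finset E) : ℕ :=
  {C ∈ comps src tgt S | ¬ TrivComp src tgt col S C}.ncard

/-- every subgraph satisfies m' ≤ 2n' − c' − 3c'₀ -/
def ConeLamanSparse [DecidableEq V] {k : ℕ} (src tgt : E → V) (col : E → ZMod k) : Prop :=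
  ∀ S : Finset E,
    S.card + cN src tgt col S + 3 * c0 src tgt col S ≤ 2 * (verts src tgt S).card

def ConeLaman [DecidableEq V] [Fintype V] [Fintype E] {k : ℕ}
    (src tgt : E → V) (col : E → ZMod k) : Prop :=
  Fintype.card E + 1 = 2 * Fintype.card V ∧ ConeLamanSparse src tgt col

def Cone22 [DecidableEq V] [Fintype V] [Fintype E] {k : ℕ}
    (src tgt : E → V) (col : E → ZMod k) : Prop :=
  Fintype.card E = 2 * Fintype.card V ∧
  ∀ S : Finset E, S.card + 2 * c0 src tgt col S ≤ 2 * (verts src tgt S).card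

def Refl22 [DecidableEq V] [Fintype V] [Fintype E] {k : ℕ}
    (src tgt : E → V) (col : E → ZMod k) : Prop :=
  Fintype.card E + 1 = 2 * Fintype.card V ∧
  ∀ S : Finset E,
    S.card + cN src tgt col S + 2 * c0 src tgt col S ≤ 2 * (verts src tgt S).card

def ReflLaman [DecidableEq V] [Fintype V] [Fintype E]
    (src tgt : E → V) (col : E → ZMod 2) : Prop :=
  Fintype.card E + 1 = 2 * Fintype.card V ∧ ConeLamanSparse src tgt col

/-- every subgraph of S satisfies m' ≤ 2n' − 2c' − 3c'₀ -/
def RossSparse [DecidableEq V] {k : ℕ} (src tgt : E → V) (col : E → ZMod k)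
    (S : Finset E) : Prop :=
  ∀ S' ⊆ S,
    S'.card + 2 * cN src tgt col S' + 3 * c0 src tgt col S' ≤ 2 * (verts src tgt S').card

/-- The subgraph S is a Ross graph: m = 2n − 2 and Ross-sparse. -/
def IsRossSub [DecidableEq V] {k : ℕ} (src tgt : E → V) (col : E → ZMod k)
    (S : Finset E) : Prop :=
  S.card + 2 = 2 * (verts src tgt S).card ∧ RossSparse src tgt col S

/-- Becomes a Ross graph after deleting any single edge. -/
def RossCircuit [DecidableEq V] [DecidableEq E] {k : ℕ} (src tgt : E → V)
    (col : E → ZMod k) (S : Finset E) : Prop :=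
  S.Nonempty ∧ ∀ e ∈ S, IsRossSub src tgt col (S.erase e)

/-- A (2,2)-block / (2,2)-graph: m = 2n−2, and (2,2)-sparse. -/
def Tight22 [DecidableEq V] (src tgt : E → V) (S : Finset E) : Prop :=
  S.card + 2 = 2 * (verts src tgt S).card ∧
  ∀ S' ⊆ S, S'.Nonempty → S'.card + 2 ≤ 2 * (verts src tgt S').card

def SpanningTree [DecidableEq V] [Fintype V] (src tgt : E → V) (T : Finset E) : Prop :=
  (∀ a b : V, Conn src tgt T a b) ∧ T.card + 1 = Fintype.card V

def Spanning [DecidableEq V] [Fintype V] (src tgt : E → V) (S : Finset E) : Prop :=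
  verts src tgt S = Finset.univ

/-- A map-graph (exactly one cycle per component, i.e. every component has as many
edges as vertices) all of whose components have nontrivial ρ-image. -/
def Map11 [DecidableEq V] {k : ℕ} (src tgt : E → V) (col : E → ZMod k) (S : Finset E) : Prop :=
  (∀ C ∈ comps src tgt S, ((S : Set E) ∩ {e | src e ∈ C}).ncard = C.ncard) ∧
  (∀ C ∈ comps src tgt S, ¬ TrivComp src tgt col S C)

end Preamble

/-- Source map of the ℤ/2ℤ lift (double cover). -/
def liftSrc {V E : Type} (src : E → V) : E × ZMod 2 → V × ZMod 2 :=
  fun ez => (src ez.1, ez.2)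

/-- Target map of the ℤ/2ℤ lift: the edge (e,g) joins (src e, g) to (tgt e, g + γ_e). -/
def liftTgt {V E : Type} (tgt : E → V) (col : E → ZMod 2) : E × ZMod 2 → V × ZMod 2 :=
  fun ez => (tgt ez.1, ez.2 + col ez.1)

section Aux
variable {V E : Type}

lemma walk_append (src tgt : E → V) (S : Finset E) :
    ∀ (l l' : List (E × Bool)) (a b c : V),
      IsWalk src tgt S a b l → IsWalk src tgt S b c l' →
      IsWalk src tgt S a c (l ++ l') := by
  intro l
  induction l with
  | nil =>
    intro l' a b c h1 h2
    simp only [IsWalk] at h1; subst h1; simpa using h2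
  | cons p rest ih =>
    rintro l' a b c ⟨hm, h⟩ h2
    obtain ⟨e, o⟩ := p
    cases o with
    | true =>
      simp only [if_pos rfl] at h
      exact ⟨hm, by simp only [if_pos rfl]; exact ⟨h.1, ih l' _ _ _ h.2 h2⟩⟩
    | false =>
      simp only [Bool.false_eq_true, if_neg (by simp : ¬ (false = true))] at h
      exact ⟨hm, by
        simp only [Bool.false_eq_true, if_neg (by simp : ¬ (false = true))]
        exact ⟨h.1, ih l' _ _ _ h.2 h2⟩⟩

lemma walk_reverse (src tgt : E → V) (S : Finset E) :
    ∀ (l : List (E × Bool)) (a b : V),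
      IsWalk src tgt S a b l →
      IsWalk src tgt S b a (l.reverse.map fun s => (s.1, !s.2)) := by
  intro l
  induction l with
  | nil =>
    intro a b h1
    simp only [IsWalk] at h1; subst h1; simp [IsWalk]
  | cons p rest ih =>
    rintro a b ⟨hm, h⟩
    obtain ⟨e, o⟩ := p
    cases o with
    | true =>
      simp only [if_pos rfl] at h
      have h1 : IsWalk src tgt S b (tgt e) (rest.reverse.map fun s => (s.1, !s.2)) :=
        ih _ _ h.2
      have h2 : IsWalk src tgt S (tgt e) a [(e, false)] :=
        ⟨hm, by simp [IsWalk, h.1]⟩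
      have := walk_append src tgt S _ _ _ _ _ h1 h2
      simpa using this
    | false =>
      simp only [Bool.false_eq_true, if_neg (by simp : ¬ (false = true))] at h
      have h1 : IsWalk src tgt S b (src e) (rest.reverse.map fun s => (s.1, !s.2)) :=
        ih _ _ h.2
      have h2 : IsWalk src tgt S (src e) a [(e, true)] :=
        ⟨hm, by simp [IsWalk, h.1]⟩
      have := walk_append src tgt S _ _ _ _ _ h1 h2
      simpa using this

lemma wsum_append {k : ℕ} (col : E → ZMod k) (l l' : List (E × Bool)) :
    wsum col (l ++ l') = wsum col l + wsum col l' := by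
  simp [wsum]

lemma wsum_revflip {k : ℕ} (col : E → ZMod k) (l : List (E × Bool)) :
    wsum col (l.reverse.map fun s => (s.1, !s.2)) = - wsum col l := by
  induction l with
  | nil => simp [wsum]
  | cons p rest ih =>
    obtain ⟨e, o⟩ := p
    simp only [List.reverse_cons, List.map_append]
    rw [wsum_append, ih]
    cases o <;> simp [wsum] <;> abel

/-- lift of a walk starting at label g -/
def liftL (col : E → ZMod 2) : ZMod 2 → List (E × Bool) → List ((E × ZMod 2) × Bool)
  | _, [] => []
  | g, (e, true) :: rest => ((e, g), true) :: liftL col (g + col e) rest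
  | g, (e, false) :: rest => ((e, g - col e), false) :: liftL col (g - col e) rest

lemma lift_walk (src tgt : E → V) (col : E → ZMod 2) (S : Finset E) :
    ∀ (l : List (E × Bool)) (a b : V) (g : ZMod 2),
      IsWalk src tgt S a b l →
      IsWalk (liftSrc src) (liftTgt tgt col) (S ×ˢ Finset.univ) (a, g)
        (b, g + wsum col l) (liftL col g l) := by
  intro l
  induction l with
  | nil =>
    intro a b g h1
    simp only [IsWalk] at h1; subst h1
    simp [IsWalk, liftL, wsum]
  | cons p rest ih =>
    rintro a b g ⟨hm, h⟩
    obtain ⟨e, o⟩ := p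
    cases o with
    | true =>
      simp only [if_pos rfl] at h
      refine ⟨by simp [Finset.mem_product, hm], ?_⟩
      simp only [if_pos rfl]
      constructor
      · simp [liftSrc, h.1]
      · have := ih _ _ (g + col e) h.2
        have heq : g + col e + wsum col rest = g + wsum col ((e, true) :: rest) := by
          simp [wsum]; abel
        rw [heq] at this
        simpa [liftTgt] using this
    | false =>
      simp only [Bool.false_eq_true, if_neg (by simp : ¬ (false = true))] at h
      refine ⟨by simp [Finset.mem_product, hm], ?_⟩
      simp only [Bool.false_eq_true, if_neg (by simp : ¬ (false = true))]
      constructor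
      · simp [liftTgt, h.1]
      · have := ih _ _ (g - col e) h.2
        have heq : g - col e + wsum col rest = g + wsum col ((e, false) :: rest) := by
          simp [wsum, sub_eq_add_neg, ZMod.neg_eq_self_mod_two, add_assoc]
        rw [heq] at this
        exact this

lemma tree_walk_label (src tgt : E → V) (col : E → ZMod 2) (T : Finset E)
    (hT0 : ∀ e ∈ T, col e = 0) :
    ∀ (l : List ((E × ZMod 2) × Bool)) (p q : V × ZMod 2),
      IsWalk (liftSrc src) (liftTgt tgt col) (T ×ˢ Finset.univ) p q l → p.2 = q.2 := by
  intro l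
  induction l with
  | nil =>
    intro p q h1
    simp only [IsWalk] at h1; subst h1; rfl
  | cons s rest ih =>
    rintro p q ⟨hm, h⟩
    obtain ⟨⟨e, z⟩, o⟩ := s
    have heT : e ∈ T := by
      simpa using (Finset.mem_product.mp hm).1
    have hc : col e = 0 := hT0 e heT
    cases o with
    | true =>
      simp only [if_pos rfl] at h
      have h2 := ih _ _ h.2
      have : p.2 = z := by rw [← h.1]; rfl
      rw [this]
      rw [← h2]
      simp [liftTgt, hc]
    | false =>
      simp only [Bool.false_eq_true, if_neg (by simp : ¬ (false = true))] at h
      have h2 := ih _ _ h.2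
      have : p.2 = z + col e := by rw [← h.1]; rfl
      rw [this, hc, add_zero, ← h2]
      rfl

end Aux

/-- For a decomposition of (G,γ) into a spanning tree T colored 0 and a spanning
map-graph X with all components of nontrivial ρ-image: (1) T lifts to two
disjoint copies of itself, each edge joining vertices of equal label, and all
label-0 vertices lie in one component of the lift of T; (2) each connected
component of X lifts to a connected subgraph of the double cover. -/
theorem stmt15 {V E : Type} [Fintype V] [Fintype E] [DecidableEq V] [DecidableEq E]
    (src tgt : E → V) (col : E → ZMod 2) (T X : Finset E)
    (hdisj : Disjoint T X) (hunion : T ∪ X = Finset.univ)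
    (hT : SpanningTree src tgt T) (hT0 : ∀ e ∈ T, col e = 0)
    (hXsp : Spanning src tgt X) (hX : Map11 src tgt col X) :
    ((∀ e ∈ T, ∀ g : ZMod 2, liftTgt tgt col (e, g) = (tgt e, g)) ∧
      (∀ a b : V,
        Conn (liftSrc src) (liftTgt tgt col) (T ×ˢ Finset.univ) (a, 0) (b, 0)) ∧
      (∀ a b : V,
        ¬ Conn (liftSrc src) (liftTgt tgt col) (T ×ˢ Finset.univ) (a, 0) (b, 1))) ∧
    (∀ C ∈ comps src tgt X, ∀ u ∈ C, ∀ v ∈ C, ∀ g h : ZMod 2,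
      Conn (liftSrc src) (liftTgt tgt col) (X ×ˢ Finset.univ) (u, g) (v, h)) := by
  have treewsum : ∀ (l : List (E × Bool)) (a b : V), IsWalk src tgt T a b l →
      wsum col l = 0 := by
    intro l
    induction l with
    | nil => intro a b _; simp [wsum]
    | cons p rest ih =>
      rintro a b ⟨hm, h⟩
      obtain ⟨e, o⟩ := p
      have hc : col e = 0 := hT0 e hm
      cases o with
      | true =>
        simp only [if_pos rfl] at h
        have := ih _ _ h.2
        simpa [wsum, hc] using this
      | false =>
        simp only [Bool.false_eq_true, if_neg (by simp : ¬ (false = true))] at h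
        have := ih _ _ h.2
        simpa [wsum, hc] using this
  refine ⟨⟨?_, ?_, ?_⟩, ?_⟩
  · intro e he g
    simp [liftTgt, hT0 e he]
  · intro a b
    obtain ⟨l, hl⟩ := hT.1 a b
    refine ⟨liftL col 0 l, ?_⟩
    have := lift_walk src tgt col T l a b 0 hl
    rwa [treewsum l a b hl, add_zero] at this
  · rintro a b ⟨l, hl⟩
    have := tree_walk_label src tgt col T hT0 l (a, 0) (b, 1) hl
    simp at this
  · rintro C ⟨v0, hv0, rfl⟩ u hu v hv g h
    obtain ⟨l1, hl1⟩ := hu.2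
    obtain ⟨l2, hl2⟩ := hv.2
    have hnt := hX.2 _ ⟨v0, hv0, rfl⟩
    simp only [TrivComp, not_forall] at hnt
    obtain ⟨w, hw, lc, hlc, hs⟩ := hnt
    obtain ⟨l3, hl3⟩ := hw.2
    -- reversed walks
    have hl1r := walk_reverse src tgt X l1 v0 u hl1
    have hl3r := walk_reverse src tgt X l3 v0 w hl3
    -- base walk u -> v
    set r1 := l1.reverse.map fun s => (s.1, !s.2) with hr1
    set r3 := l3.reverse.map fun s => (s.1, !s.2) with hr3
    have W0 : IsWalk src tgt X u v (r1 ++ l2) :=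
      walk_append src tgt X _ _ _ _ _ hl1r hl2
    have W1 : IsWalk src tgt X u v (r1 ++ (l3 ++ (lc ++ (r3 ++ l2)))) := by
      refine walk_append src tgt X _ _ _ _ _ hl1r ?_
      refine walk_append src tgt X _ _ _ _ _ hl3 ?_
      refine walk_append src tgt X _ _ _ _ _ hlc ?_
      exact walk_append src tgt X _ _ _ _ _ hl3r hl2
    have hsc : wsum col lc = 1 := by
      have : ∀ x : ZMod 2, x ≠ 0 → x = 1 := by decide
      exact this _ hs
    have hw1 : wsum col (r1 ++ (l3 ++ (lc ++ (r3 ++ l2)))) = wsum col (r1 ++ l2) + 1 := by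
      simp only [wsum_append, hr1, hr3, wsum_revflip, hsc]
      abel
    have hcase : g + wsum col (r1 ++ l2) = h ∨ g + (wsum col (r1 ++ l2) + 1) = h := by
      have h2 : ∀ x y : ZMod 2, x = y ∨ x + 1 = y := by decide
      rcases h2 (g + wsum col (r1 ++ l2)) h with h1 | h1
      · exact Or.inl h1
      · exact Or.inr (by rw [← h1]; ring)
    rcases hcase with hc | hc
    · refine ⟨liftL col g (r1 ++ l2), ?_⟩
      have := lift_walk src tgt col X _ u v g W0
      rwa [hc] at this
    · refine ⟨liftL col g (r1 ++ (l3 ++ (lc ++ (r3 ++ l2)))), ?_⟩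
      have := lift_walk src tgt col X _ u v g W1
      rw [hw1, ← add_assoc] at this
      rwa [add_assoc, hc] at this
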